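/- Suppose f ∈ K[X,X⁻¹] satisfies equation (★). Then there exist a natural number d ≥ 0 such that f is one of the following eight Laurent polynomials: X^{−2d}·(R_d + Q); X^{−2d}·(R_d − 1); X^{−2d}·(R_d + b + u·X^{−1}); X^{−2d}·(R_d + b − v·X^{−1}); −u·X^{2d+1} − R_d; v·X^{2d+1} − R_d; Q·X^{2d} − R_d; −X^{2d} − R_d. (For d = 0 the first two families give the constant solutions Q and −1; expanded out, these are the families (i)–(vi) of Lemma 3.4 of the paper: e.g. X^{−2d}(R_d + Q) = b + cX^{−1} + bX^{−2} + ⋯ + cX^{1−2d} + Q·X^{−2d}.) -/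

import Mathlib

open LaurentPolynomial

/-- Equation (★): `(X² − 1)·f·f∨ = b·(X²·f∨ − f) − c·(X·f − X·f∨) + Q·(X² − 1)`,
where `Q = u·v`, `c = u − v`, `b = Q − 1` and `f∨` is the image of `f` under the
`K`-algebra involution of `K[X,X⁻¹]` sending `X` to `X⁻¹`. -/
def SatStar {K : Type*} [Field K] (u v : K) (f : K[T;T⁻¹]) : Prop :=
  (T 2 - 1) * (f * invert f) =
    C (u * v - 1) * (T 2 * invert f - f)
      - C (u - v) * (T 1 * f - T 1 * invert f)
      + C (u * v) * (T 2 - 1)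

/-- `R_d = Σ_{j=1}^{d} (b·X^{2j} + c·X^{2j−1})`. -/
noncomputable def Rpoly {K : Type*} [Field K] (u v : K) (d : ℕ) : K[T;T⁻¹] :=
  ∑ j ∈ Finset.range d, (C (u * v - 1) * T (2 * (j : ℤ) + 2) + C (u - v) * T (2 * (j : ℤ) + 1))

namespace StarAux

open Polynomial

variable {K : Type*} [Field K]

/-- The target conclusion. -/
def Concl {K : Type*} [Field K] (u v : K) (f : K[T;T⁻¹]) : Prop :=
  ∃ d : ℕ,
      f = T (-(2 * (d : ℤ))) * (Rpoly u v d + LaurentPolynomial.C (u * v)) ∨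
      f = T (-(2 * (d : ℤ))) * (Rpoly u v d - 1) ∨
      f = T (-(2 * (d : ℤ))) * (Rpoly u v d + LaurentPolynomial.C (u * v - 1) + LaurentPolynomial.C u * T (-1)) ∨
      f = T (-(2 * (d : ℤ))) * (Rpoly u v d + LaurentPolynomial.C (u * v - 1) - LaurentPolynomial.C v * T (-1)) ∨
      f = -(LaurentPolynomial.C u) * T (2 * (d : ℤ) + 1) - Rpoly u v d ∨
      f = LaurentPolynomial.C v * T (2 * (d : ℤ) + 1) - Rpoly u v d ∨
      f = LaurentPolynomial.C (u * v) * T (2 * (d : ℤ)) - Rpoly u v d ∨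
      f = -T (2 * (d : ℤ)) - Rpoly u v d

lemma domain_aux : NoZeroDivisors (K[T;T⁻¹]) := by
  unfold LaurentPolynomial; infer_instance

lemma cancelT {a b : K[T;T⁻¹]} (hne : (T 1^2 - 1 : K[T;T⁻¹]) ≠ 0)
    (h : (T 1^2 - 1) * a = (T 1^2 - 1) * b) : a = b := by
  have : NoZeroDivisors (K[T;T⁻¹]) := domain_aux
  exact mul_left_cancel₀ hne h

lemma Tsq_ne : (T 1^2 - 1 : K[T;T⁻¹]) ≠ 0 := by
  have h : (T 1^2 - 1 : K[T;T⁻¹]) = Polynomial.toLaurent (Polynomial.X^2 - 1) := by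
    simp [map_sub, map_pow, Polynomial.toLaurent_X, map_one]
  rw [h, Polynomial.toLaurent_ne_zero]
  intro hq
  have := congrArg (fun q => Polynomial.coeff q 2) hq
  simp [Polynomial.coeff_X_pow, Polynomial.coeff_one] at this

lemma ZERO (e1 e0 : K)
    (h : (T 1^2 - 1 : K[T;T⁻¹]) ∣ (LaurentPolynomial.C e1 * T 1 + LaurentPolynomial.C e0)) :
    e1 = 0 ∧ e0 = 0 := by
  obtain ⟨w, hw⟩ := h
  obtain ⟨n, w', hw'⟩ := w.exists_T_pow
  have key : Polynomial.toLaurent (Polynomial.C e1 * Polynomial.X^(n+1) + Polynomial.C e0 * Polynomial.X^n)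
      = Polynomial.toLaurent ((Polynomial.X^2 - 1) * w') := by
    simp only [map_add, map_mul, map_sub, map_pow, map_one, Polynomial.toLaurent_C,
      Polynomial.toLaurent_X, hw']
    calc LaurentPolynomial.C e1 * T 1 ^ (n+1) + LaurentPolynomial.C e0 * T 1 ^ n
        = (LaurentPolynomial.C e1 * T 1 + LaurentPolynomial.C e0) * T 1 ^ n := by ring
      _ = (T 1^2 - 1) * (w * T (n:ℤ)) := by
          rw [hw]
          have : (T 1 : K[T;T⁻¹])^n = T (n:ℤ) := by rw [T_pow]; ring_nf
          rw [this]; ring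
  have hpoly := Polynomial.toLaurent_injective key
  have hdvd : (Polynomial.X^2 - 1 : K[X]) ∣ Polynomial.X^n * (Polynomial.C e1 * Polynomial.X + Polynomial.C e0) := by
    refine ⟨w', ?_⟩
    rw [← hpoly]; ring
  have hc : IsCoprime ((Polynomial.X : K[X])^n) (Polynomial.X^2 - 1) :=
    IsCoprime.pow_left ⟨Polynomial.X, -1, by ring⟩
  have hdvd2 : (Polynomial.X^2 - 1 : K[X]) ∣ (Polynomial.C e1 * Polynomial.X + Polynomial.C e0) :=
    hc.symm.dvd_of_dvd_mul_left hdvd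
  have hzero : (Polynomial.C e1 * Polynomial.X + Polynomial.C e0 : K[X]) = 0 := by
    apply Polynomial.eq_zero_of_dvd_of_degree_lt hdvd2
    apply lt_of_le_of_lt Polynomial.degree_linear_le
    rw [show (Polynomial.X^2 - 1 : K[X]) = Polynomial.X^2 - Polynomial.C 1 by simp,
      Polynomial.degree_X_pow_sub_C (by norm_num)]
    norm_num
  constructor
  · have := congrArg (fun q => Polynomial.coeff q 1) hzero
    simpa using this
  · have := congrArg (fun q => Polynomial.coeff q 0) hzero
    simpa using this

lemma dvdE (k : ℤ) : (T 1^2 - 1 : K[T;T⁻¹]) ∣ (T (2*k) - 1) := by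
  have base : ∀ n : ℕ, (T 1^2 - 1 : K[T;T⁻¹]) ∣ (T (2*(n:ℤ)) - 1) := by
    intro n
    induction n with
    | zero => simp
    | succ n ih =>
      obtain ⟨w, hw⟩ := ih
      refine ⟨T (2*(n:ℤ)) + w, ?_⟩
      have : (T (2*((n:ℤ)+1)) : K[T;T⁻¹]) = T (2*(n:ℤ)) * T 1 * T 1 := by
        rw [show (2*((n:ℤ)+1)) = (2*(n:ℤ)+1)+1 by ring, T_add, T_add]
      push_cast
      rw [this]
      linear_combination hw
  rcases le_or_gt 0 k with hk | hk
  · have := base k.toNat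
    rwa [Int.toNat_of_nonneg hk] at this
  · obtain ⟨w, hw⟩ := base (-k).toNat
    have hc : ((-k).toNat : ℤ) = -k := Int.toNat_of_nonneg (by omega)
    rw [hc] at hw
    refine ⟨-(T (2*k) * w), ?_⟩
    have h1 : (T (2*k) : K[T;T⁻¹]) * T (2*(-k)) = 1 := by
      rw [← T_add, show 2*k + 2*(-k) = 0 by ring, T_zero]
    linear_combination (-(T (2*k) : K[T;T⁻¹]))*hw + h1

lemma TEL (u v : K) (d : ℕ) :
    (T 1^2 - 1) * Rpoly u v d
      = ((LaurentPolynomial.C u * LaurentPolynomial.C v - 1) * T 1^2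
          + (LaurentPolynomial.C u - LaurentPolynomial.C v) * T 1) * (T (2*(d:ℤ)) - 1) := by
  induction d with
  | zero => simp [Rpoly]
  | succ d ih =>
    rw [Rpoly, Finset.sum_range_succ, ← Rpoly]
    have e1 : (T (2*(d:ℤ)+2) : K[T;T⁻¹]) = T (2*(d:ℤ)) * T 1 * T 1 := by
      rw [show (2*(d:ℤ)+2) = (2*(d:ℤ)+1)+1 by ring, T_add, T_add]
    have e2 : (T (2*(d:ℤ)+1) : K[T;T⁻¹]) = T (2*(d:ℤ)) * T 1 := by rw [T_add]
    have e3 : (T (2*((d:ℤ)+1)) : K[T;T⁻¹]) = T (2*(d:ℤ)) * T 1 * T 1 := by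
      rw [show (2*((d:ℤ)+1)) = (2*(d:ℤ)+1)+1 by ring, T_add, T_add]
    push_cast
    rw [e3]
    rw [e1, e2] at *
    try simp only [map_sub, map_mul, map_one, map_neg]
    linear_combination ih

lemma R0 (u v : K) (d : ℕ) (hb : u*v - 1 = 0) (hc : u - v = 0) : Rpoly u v d = 0 := by
  simp [Rpoly, hb, hc]

lemma invert_toLaurent_eq (g : K[X]) (N : ℕ) (h : g.natDegree < N + 1) :
    Polynomial.toLaurent (g.reflect N) = invert (Polynomial.toLaurent g) * T (N : ℤ) := by
  conv_lhs => rw [Polynomial.as_sum_range' g (N+1) h]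
  conv_rhs => rw [Polynomial.as_sum_range' g (N+1) h]
  have H : ∀ s : Finset ℕ, (reflect N (∑ i ∈ s, (monomial i) (g.coeff i))) =
      ∑ i ∈ s, reflect N ((monomial i) (g.coeff i)) := by
    intro s
    induction s using Finset.induction with
    | empty => simp [reflect_zero]
    | insert a s hm ih => rw [Finset.sum_insert hm, Finset.sum_insert hm, reflect_add, ih]
  rw [H, map_sum, map_sum, map_sum, Finset.sum_mul]
  refine Finset.sum_congr rfl fun i hi => ?_
  have hiN : i ≤ N := by simpa [Nat.lt_succ_iff] using Finset.mem_range.mp hi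
  rw [← Polynomial.C_mul_X_pow_eq_monomial, reflect_C_mul_X_pow, revAt_le hiN,
    Polynomial.toLaurent_C_mul_X_pow, Polynomial.toLaurent_C_mul_X_pow]
  simp only [map_mul, invert_C, invert_T, mul_assoc, ← T_add]
  congr 2
  omega

lemma reflect_natDegree_le (g : K[X]) (N : ℕ) (h : g.natDegree ≤ N) :
    (Polynomial.reflect N g).natDegree ≤ N := by
  apply Polynomial.natDegree_le_iff_coeff_eq_zero.mpr
  intro i hi
  rw [Polynomial.coeff_reflect]
  apply Polynomial.coeff_eq_zero_of_natDegree_lt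
  have hre : Polynomial.revAt N i = i := by
    rw [← Polynomial.revAtFun_eq]
    unfold Polynomial.revAtFun
    rw [if_neg (by omega : ¬ i ≤ N)]
  rw [hre]; omega

lemma gexp (g : K[X]) (h : g.natDegree ≤ 2) :
    g = Polynomial.C (g.coeff 0) + Polynomial.C (g.coeff 1) * X + Polynomial.C (g.coeff 2) * X^2 := by
  apply Polynomial.ext
  intro k
  match k with
  | 0 => simp
  | 1 => simp
  | 2 => simp [Polynomial.coeff_add, Polynomial.coeff_C]
  | (n+3) =>
    rw [Polynomial.coeff_eq_zero_of_natDegree_lt (by omega)]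
    simp [Polynomial.coeff_C, Polynomial.coeff_X, Polynomial.coeff_X_pow]

lemma reflexp (g : K[X]) (h : g.natDegree ≤ 2) :
    Polynomial.reflect 2 g
      = Polynomial.C (g.coeff 2) + Polynomial.C (g.coeff 1) * X + Polynomial.C (g.coeff 0) * X^2 := by
  apply Polynomial.ext
  intro k
  rw [Polynomial.coeff_reflect]
  match k with
  | 0 => simp [Polynomial.revAt_le]
  | 1 => simp [Polynomial.revAt_le]
  | 2 => simp [Polynomial.revAt_le, Polynomial.coeff_C]
  | (n+3) =>
    have h3 : Polynomial.revAt 2 (n+3) = n+3 := by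
      rw [← Polynomial.revAtFun_eq]
      unfold Polynomial.revAtFun
      rw [if_neg (by omega)]
    rw [h3, Polynomial.coeff_eq_zero_of_natDegree_lt (by omega)]
    simp [Polynomial.coeff_C, Polynomial.coeff_X, Polynomial.coeff_X_pow]

lemma quart_eq (c0 c1 c2 c3 c4 d0 d1 d2 d3 d4 : K)
    (h : Polynomial.C c0 + Polynomial.C c1 * X + Polynomial.C c2 * X^2 + Polynomial.C c3 * X^3 + Polynomial.C c4 * X^4
       = Polynomial.C d0 + Polynomial.C d1 * X + Polynomial.C d2 * X^2 + Polynomial.C d3 * X^3 + Polynomial.C d4 * X^4) :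
    c0 = d0 ∧ c1 = d1 ∧ c2 = d2 := by
  have e0 := congrArg (fun q => Polynomial.coeff q 0) h
  have e1 := congrArg (fun q => Polynomial.coeff q 1) h
  have e2 := congrArg (fun q => Polynomial.coeff q 2) h
  simp [Polynomial.coeff_add, Polynomial.coeff_C, Polynomial.coeff_C_mul, Polynomial.coeff_X_pow] at e0 e1 e2
  exact ⟨e0, e1, e2⟩

lemma prodForm (x0 x1 x2 : K) :
    (Polynomial.C x0 + Polynomial.C x1 * X + Polynomial.C x2 * X^2) *
      (Polynomial.C x2 + Polynomial.C x1 * X + Polynomial.C x0 * X^2)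
    = Polynomial.C (x0*x2) + Polynomial.C (x0*x1+x1*x2) * X
        + Polynomial.C (x0*x0+x1*x1+x2*x2) * X^2 + Polynomial.C (x0*x1+x1*x2) * X^3
        + Polynomial.C (x0*x2) * X^4 := by
  simp only [map_mul, map_add]
  ring

lemma ALG (u v α β γ : K) (h0 : γ*α = -(u*v)) (h1 : γ*β + β*α = (u*v-1)*(u-v))
    (h2 : γ*γ + β*β + α*α = 1 + (u-v)*(u-v) + (u*v)*(u*v)) :
    (α = 1 ∧ β = -(u-v) ∧ γ = -(u*v)) ∨ (α = -(u*v) ∧ β = -(u-v) ∧ γ = 1) ∨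
    (α = -1 ∧ β = u-v ∧ γ = u*v) ∨ (α = u*v ∧ β = u-v ∧ γ = -1) ∨
    (α = u ∧ β = u*v-1 ∧ γ = -v) ∨ (α = -v ∧ β = u*v-1 ∧ γ = u) ∨
    (α = -u ∧ β = -(u*v-1) ∧ γ = v) ∨ (α = v ∧ β = -(u*v-1) ∧ γ = -u) := by
  have h4 : ((α+γ) - (u*v-1)) * (((α+γ) + (u*v-1)) * (((α+γ) - (u-v)) * ((α+γ) + (u-v)))) = 0 := by
    linear_combination ((α+γ)^2)*h2 + (2*(α+γ)^2)*h0 +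
      (γ*β+β*α - (u*v-1)*(u-v) - 2*β*(α+γ))*h1
  rcases mul_eq_zero.mp h4 with hb1 | h4
  · have hαγ : (α - u*v)*(α + 1) = 0 := by linear_combination α*hb1 - h0
    have hβ : (β - (u-v))*(β + (u-v)) = 0 := by
      linear_combination h2 + 2*h0 - (α+γ+(u*v-1))*hb1
    have hβc : β = u - v ∨ (u*v - 1 = 0 ∧ β = -(u-v)) := by
      rcases mul_eq_zero.mp hβ with h | h
      · left; linear_combination h
      · have h2bc : (2*(u-v)) * (u*v-1) = 0 := by
          linear_combination -h1 + (α+γ)*h - (u-v)*hb1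
        rcases mul_eq_zero.mp h2bc with h2c | hbz
        · rcases mul_eq_zero.mp h2c with h2z | hcz
          · left; linear_combination h - (u-v)*h2z
          · left; linear_combination h - 2*hcz
        · exact Or.inr ⟨hbz, by linear_combination h⟩
    rcases mul_eq_zero.mp hαγ with hα | hα
    · rcases hβc with hβc | ⟨hbz, hβc⟩
      · refine Or.inr (Or.inr (Or.inr (Or.inl ⟨by linear_combination hα, hβc, ?_⟩)))
        linear_combination hb1 - hα
      · refine Or.inl ⟨by linear_combination hα + hbz, hβc, by linear_combination hb1 - hα + hbz⟩
    · rcases hβc with hβc | ⟨hbz, hβc⟩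
      · refine Or.inr (Or.inr (Or.inl ⟨by linear_combination hα, hβc, by linear_combination hb1 - hα⟩))
      · refine Or.inr (Or.inl ⟨by linear_combination hα + hbz, hβc, by linear_combination hb1 - hα + hbz⟩)
  rcases mul_eq_zero.mp h4 with hb2 | h4
  · have hαγ : (α + u*v)*(α - 1) = 0 := by linear_combination α*hb2 - h0
    have hβ : (β - (u-v))*(β + (u-v)) = 0 := by
      linear_combination h2 + 2*h0 - (α+γ-(u*v-1))*hb2
    have hβc : β = -(u - v) ∨ (u*v - 1 = 0 ∧ β = u-v) := by
      rcases mul_eq_zero.mp hβ with h | h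
      · have h2bc : (2*(u-v)) * (u*v-1) = 0 := by
          linear_combination -h1 - (u*v-1)*h + β*hb2
        rcases mul_eq_zero.mp h2bc with h2c | hbz
        · rcases mul_eq_zero.mp h2c with h2z | hcz
          · left; linear_combination h + (u-v)*h2z
          · left; linear_combination h + 2*hcz
        · exact Or.inr ⟨hbz, by linear_combination h⟩
      · left; linear_combination h
    rcases mul_eq_zero.mp hαγ with hα | hα
    · rcases hβc with hβc | ⟨hbz, hβc⟩
      · refine Or.inr (Or.inl ⟨by linear_combination hα, hβc, by linear_combination hb2 - hα⟩)
      · refine Or.inr (Or.inr (Or.inl ⟨by linear_combination hα - hbz, hβc,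
          by linear_combination hb2 - hα - hbz⟩))
    · rcases hβc with hβc | ⟨hbz, hβc⟩
      · refine Or.inl ⟨by linear_combination hα, hβc, by linear_combination hb2 - hα⟩
      · refine Or.inr (Or.inr (Or.inr (Or.inl ⟨by linear_combination hα - hbz, hβc,
          by linear_combination hb2 - hα - hbz⟩)))
  rcases mul_eq_zero.mp h4 with hc1 | hc2
  · have hαγ : (α - u)*(α + v) = 0 := by linear_combination α*hc1 - h0
    have hβ : (β - (u*v-1))*(β + (u*v-1)) = 0 := by
      linear_combination h2 + 2*h0 - (α+γ+(u-v))*hc1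
    have hβc : β = u*v - 1 ∨ (u - v = 0 ∧ β = -(u*v-1)) := by
      rcases mul_eq_zero.mp hβ with h | h
      · left; linear_combination h
      · have h2bc : (2*(u*v-1)) * (u-v) = 0 := by
          linear_combination -h1 + (α+γ)*h - (u*v-1)*hc1
        rcases mul_eq_zero.mp h2bc with h2c | hcz
        · rcases mul_eq_zero.mp h2c with h2z | hbz
          · left; linear_combination h - (u*v-1)*h2z
          · left; linear_combination h - 2*hbz
        · exact Or.inr ⟨hcz, by linear_combination h⟩
    rcases mul_eq_zero.mp hαγ with hα | hα
    · rcases hβc with hβc | ⟨hcz, hβc⟩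
      · refine Or.inr (Or.inr (Or.inr (Or.inr (Or.inl ⟨by linear_combination hα, hβc,
          by linear_combination hc1 - hα⟩))))
      · refine Or.inr (Or.inr (Or.inr (Or.inr (Or.inr (Or.inr (Or.inr
          ⟨by linear_combination hα + hcz, hβc, by linear_combination hc1 - hα + hcz⟩))))))
    · rcases hβc with hβc | ⟨hcz, hβc⟩
      · refine Or.inr (Or.inr (Or.inr (Or.inr (Or.inr (Or.inl ⟨by linear_combination hα, hβc,
          by linear_combination hc1 - hα⟩)))))
      · refine Or.inr (Or.inr (Or.inr (Or.inr (Or.inr (Or.inr (Or.inl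
          ⟨by linear_combination hα + hcz, hβc, by linear_combination hc1 - hα + hcz⟩))))))
  · have hαγ : (α + u)*(α - v) = 0 := by linear_combination α*hc2 - h0
    have hβ : (β - (u*v-1))*(β + (u*v-1)) = 0 := by
      linear_combination h2 + 2*h0 - (α+γ-(u-v))*hc2
    have hβc : β = -(u*v - 1) ∨ (u - v = 0 ∧ β = u*v-1) := by
      rcases mul_eq_zero.mp hβ with h | h
      · have h2bc : (2*(u*v-1)) * (u-v) = 0 := by
          linear_combination -h1 - (u-v)*h + β*hc2
        rcases mul_eq_zero.mp h2bc with h2c | hcz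
        · rcases mul_eq_zero.mp h2c with h2z | hbz
          · left; linear_combination h + (u*v-1)*h2z
          · left; linear_combination h + 2*hbz
        · exact Or.inr ⟨hcz, by linear_combination h⟩
      · left; linear_combination h
    rcases mul_eq_zero.mp hαγ with hα | hα
    · rcases hβc with hβc | ⟨hcz, hβc⟩
      · refine Or.inr (Or.inr (Or.inr (Or.inr (Or.inr (Or.inr (Or.inl
          ⟨by linear_combination hα, hβc, by linear_combination hc2 - hα⟩))))))
      · refine Or.inr (Or.inr (Or.inr (Or.inr (Or.inr (Or.inl
          ⟨by linear_combination hα - hcz, hβc, by linear_combination hc2 - hα - hcz⟩)))))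
    · rcases hβc with hβc | ⟨hcz, hβc⟩
      · refine Or.inr (Or.inr (Or.inr (Or.inr (Or.inr (Or.inr (Or.inr
          ⟨by linear_combination hα, hβc, by linear_combination hc2 - hα⟩))))))
      · refine Or.inr (Or.inr (Or.inr (Or.inr (Or.inl
          ⟨by linear_combination hα - hcz, hβc, by linear_combination hc2 - hα - hcz⟩))))

lemma RES (e1 e0 : K) (f H B S : K[T;T⁻¹]) (k : ℤ)
    (hGf : (T 1^2 - 1) * f = T (2*k) * H + S)
    (hHB : H + S = (T 1^2 - 1)*B + (LaurentPolynomial.C e1 * T 1 + LaurentPolynomial.C e0)) :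
    e1 = 0 ∧ e0 = 0 := by
  obtain ⟨w, hw⟩ := dvdE (K := K) k
  apply ZERO
  refine ⟨f - w*H - B, ?_⟩
  linear_combination -hGf - H*hw - hHB

section Fam

variable (u v : K) (f : K[T;T⁻¹]) (k : ℤ)

local notation "Cu" => (LaurentPolynomial.C u : K[T;T⁻¹])
local notation "Cv" => (LaurentPolynomial.C v : K[T;T⁻¹])

lemma famP
    (hGf : (T 1^2 - 1) * f
      = T (2*k) * (T 1^2 - (Cu - Cv) * T 1 - Cu * Cv)
        + ((Cu * Cv - 1) * T 1^2 + (Cu - Cv) * T 1)) :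
    Concl u v f := by
  rcases le_or_gt 0 k with hk | hk
  · refine ⟨k.toNat, Or.inr (Or.inr (Or.inr (Or.inr (Or.inr (Or.inr (Or.inl ?_))))))⟩
    have tel := TEL u v k.toNat
    rw [show (2*((k.toNat : ℕ):ℤ)) = 2*k by rw [Int.toNat_of_nonneg hk]] at tel ⊢
    apply cancelT Tsq_ne
    rw [hGf]
    try simp only [map_sub, map_mul, map_one, map_neg]
    linear_combination tel
  · refine ⟨(-k).toNat, Or.inl ?_⟩
    have hdk : (((-k).toNat : ℕ):ℤ) = -k := Int.toNat_of_nonneg (by omega)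
    have tel := TEL u v (-k).toNat
    have hτσ : (T (2*k) : K[T;T⁻¹]) * T (2*(((-k).toNat : ℕ):ℤ)) = 1 := by
      rw [← T_add, show 2*k + 2*(((-k).toNat : ℕ):ℤ) = 0 by rw [hdk]; ring, T_zero]
    rw [show (-(2*(((-k).toNat : ℕ):ℤ))) = 2*k by rw [hdk]; ring]
    apply cancelT Tsq_ne
    rw [hGf]
    try simp only [map_sub, map_mul, map_one, map_neg]
    linear_combination (-(T (2*k) : K[T;T⁻¹]))*tel
      + (T 1^2 + Cv*T 1 - Cu*T 1 - Cu*Cv*T 1^2)*hτσ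

lemma famP'
    (hGf : (T 1^2 - 1) * f
      = T (2*k) * (1 - (Cu - Cv) * T 1 - Cu * Cv * T 1^2)
        + ((Cu * Cv - 1) * T 1^2 + (Cu - Cv) * T 1)) :
    Concl u v f := by
  rcases le_or_gt 0 k with hk | hk
  · refine ⟨k.toNat, Or.inr (Or.inr (Or.inr (Or.inr (Or.inr (Or.inr (Or.inr ?_))))))⟩
    have tel := TEL u v k.toNat
    rw [show (2*((k.toNat : ℕ):ℤ)) = 2*k by rw [Int.toNat_of_nonneg hk]] at tel ⊢
    apply cancelT Tsq_ne
    rw [hGf]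
    try simp only [map_sub, map_mul, map_one, map_neg]
    linear_combination tel
  · refine ⟨(-k).toNat, Or.inr (Or.inl ?_)⟩
    have hdk : (((-k).toNat : ℕ):ℤ) = -k := Int.toNat_of_nonneg (by omega)
    have tel := TEL u v (-k).toNat
    have hτσ : (T (2*k) : K[T;T⁻¹]) * T (2*(((-k).toNat : ℕ):ℤ)) = 1 := by
      rw [← T_add, show 2*k + 2*(((-k).toNat : ℕ):ℤ) = 0 by rw [hdk]; ring, T_zero]
    rw [show (-(2*(((-k).toNat : ℕ):ℤ))) = 2*k by rw [hdk]; ring]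
    apply cancelT Tsq_ne
    rw [hGf]
    try simp only [map_sub, map_mul, map_one, map_neg]
    linear_combination (-(T (2*k) : K[T;T⁻¹]))*tel
      + (T 1^2 + Cv*T 1 - Cu*T 1 - Cu*Cv*T 1^2)*hτσ

lemma famS
    (hGf : (T 1^2 - 1) * f
      = -(T (2*k) * T 1 * (Cu * T 1^2 + (Cu * Cv - 1) * T 1 - Cv))
        + ((Cu * Cv - 1) * T 1^2 + (Cu - Cv) * T 1)) :
    Concl u v f := by
  rcases le_or_gt 0 k with hk | hk
  · refine ⟨k.toNat, Or.inr (Or.inr (Or.inr (Or.inr (Or.inl ?_))))⟩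
    have tel := TEL u v k.toNat
    rw [show (2*((k.toNat : ℕ):ℤ)) = 2*k by rw [Int.toNat_of_nonneg hk]] at tel
    rw [show (2*((k.toNat : ℕ):ℤ)+1) = 2*k+1 by rw [Int.toNat_of_nonneg hk], T_add]
    apply cancelT Tsq_ne
    rw [hGf]
    try simp only [map_sub, map_mul, map_one, map_neg]
    linear_combination tel
  · refine ⟨(-k-1).toNat, Or.inr (Or.inr (Or.inr (Or.inl ?_)))⟩
    have hdk : (((-k-1).toNat : ℕ):ℤ) = -k-1 := Int.toNat_of_nonneg (by omega)
    have tel := TEL u v (-k-1).toNat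
    have htz : (T 1 : K[T;T⁻¹]) * T (-1) = 1 := by rw [← T_add]; norm_num
    have hA : (T (2*k) : K[T;T⁻¹]) * T 1 * T 1 * T (2*(((-k-1).toNat : ℕ):ℤ)) = 1 := by
      rw [← T_add, ← T_add, ← T_add, show 2*k+1+1+2*(((-k-1).toNat : ℕ):ℤ) = 0 by rw [hdk]; ring,
        T_zero]
    rw [show (-(2*(((-k-1).toNat : ℕ):ℤ))) = (2*k+1)+1 by rw [hdk]; ring, T_add, T_add]
    apply cancelT Tsq_ne
    rw [hGf]
    try simp only [map_sub, map_mul, map_one, map_neg]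
    linear_combination (-(T 1^2 * T (2*k) : K[T;T⁻¹]))*tel
      + (T 1^2 + Cv*T 1 - Cu*T 1 - Cu*Cv*T 1^2)*hA
      + (Cv*T 1^3*T (2*k) - Cv*T 1*T (2*k))*htz

lemma famS'
    (hGf : (T 1^2 - 1) * f
      = -(T (2*k) * T 1 * (-Cv * T 1^2 + (Cu * Cv - 1) * T 1 + Cu))
        + ((Cu * Cv - 1) * T 1^2 + (Cu - Cv) * T 1)) :
    Concl u v f := by
  rcases le_or_gt 0 k with hk | hk
  · refine ⟨k.toNat, Or.inr (Or.inr (Or.inr (Or.inr (Or.inr (Or.inl ?_)))))⟩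
    have tel := TEL u v k.toNat
    rw [show (2*((k.toNat : ℕ):ℤ)) = 2*k by rw [Int.toNat_of_nonneg hk]] at tel
    rw [show (2*((k.toNat : ℕ):ℤ)+1) = 2*k+1 by rw [Int.toNat_of_nonneg hk], T_add]
    apply cancelT Tsq_ne
    rw [hGf]
    try simp only [map_sub, map_mul, map_one, map_neg]
    linear_combination tel
  · refine ⟨(-k-1).toNat, Or.inr (Or.inr (Or.inl ?_))⟩
    have hdk : (((-k-1).toNat : ℕ):ℤ) = -k-1 := Int.toNat_of_nonneg (by omega)
    have tel := TEL u v (-k-1).toNat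
    have htz : (T 1 : K[T;T⁻¹]) * T (-1) = 1 := by rw [← T_add]; norm_num
    have hA : (T (2*k) : K[T;T⁻¹]) * T 1 * T 1 * T (2*(((-k-1).toNat : ℕ):ℤ)) = 1 := by
      rw [← T_add, ← T_add, ← T_add, show 2*k+1+1+2*(((-k-1).toNat : ℕ):ℤ) = 0 by rw [hdk]; ring,
        T_zero]
    rw [show (-(2*(((-k-1).toNat : ℕ):ℤ))) = (2*k+1)+1 by rw [hdk]; ring, T_add, T_add]
    apply cancelT Tsq_ne
    rw [hGf]
    try simp only [map_sub, map_mul, map_one, map_neg]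
    linear_combination (-(T 1^2 * T (2*k) : K[T;T⁻¹]))*tel
      + (T 1^2 + Cv*T 1 - Cu*T 1 - Cu*Cv*T 1^2)*hA
      + (Cu*T 1*T (2*k) - Cu*T 1^3*T (2*k))*htz

end Fam

section Wrong

variable (u v : K) (f : K[T;T⁻¹]) (k : ℤ)

local notation "Cu" => (LaurentPolynomial.C u : K[T;T⁻¹])
local notation "Cv" => (LaurentPolynomial.C v : K[T;T⁻¹])
local notation "sTm" => ((Cu * Cv - 1) * T 1^2 + (Cu - Cv) * T 1 : K[T;T⁻¹])
local notation "Pe" => (T 1^2 - (Cu - Cv) * T 1 - Cu * Cv : K[T;T⁻¹])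
local notation "Pe'" => ((1 : K[T;T⁻¹]) - (Cu - Cv) * T 1 - Cu * Cv * T 1^2)
local notation "Se" => (Cu * T 1^2 + (Cu * Cv - 1) * T 1 - Cv : K[T;T⁻¹])
local notation "Se'" => (-Cv * T 1^2 + (Cu * Cv - 1) * T 1 + Cu : K[T;T⁻¹])

lemma W1 (hGf : (T 1^2 - 1) * f = T (2*k) * (T 1 * Pe) + sTm) : Concl u v f := by
  obtain ⟨he1, he0⟩ := RES ((u-v)-(u*v-1)) ((u*v-1)-(u-v)) f (T 1 * Pe)
    (T 1 + (Cu*Cv + Cv - Cu - 1)) sTm k hGf (by simp only [map_sub, map_mul, map_one]; ring)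
  have hfac : (u+1)*(v-1) = 0 := by linear_combination -he1
  rcases mul_eq_zero.mp hfac with hu | hv
  · have hC : Cu = -1 := by rw [show u = -1 by linear_combination hu]; simp
    refine famS u v f k (by linear_combination hGf +
      (-(T 1^2*T (2*k)) + T 1^3*T (2*k) - Cv*T 1*T (2*k) + Cv*T 1^2*T (2*k))*hC)
  · have hC : Cv = 1 := by rw [show v = 1 by linear_combination hv]; simp
    refine famS' u v f k (by linear_combination hGf +
      (T 1^2*T (2*k) - T 1^3*T (2*k) - Cu*T 1*T (2*k) + Cu*T 1^2*T (2*k))*hC)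

lemma W2 (hGf : (T 1^2 - 1) * f = T (2*k) * (T 1 * Pe') + sTm) : Concl u v f := by
  obtain ⟨he1, he0⟩ := RES ((u-v)-(u*v-1)) ((u*v-1)-(u-v)) f (T 1 * Pe')
    ((Cu*Cv + Cv - Cu - 1) - Cu*Cv*T 1) sTm k hGf (by simp only [map_sub, map_mul, map_one]; ring)
  have hfac : (u+1)*(v-1) = 0 := by linear_combination -he1
  rcases mul_eq_zero.mp hfac with hu | hv
  · have hC : Cu = -1 := by rw [show u = -1 by linear_combination hu]; simp
    refine famS' u v f k (by linear_combination hGf +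
      (T 1*T (2*k) - T 1^2*T (2*k) + Cv*T 1^2*T (2*k) - Cv*T 1^3*T (2*k))*hC)
  · have hC : Cv = 1 := by rw [show v = 1 by linear_combination hv]; simp
    refine famS u v f k (by linear_combination hGf +
      (-(T 1*T (2*k)) + T 1^2*T (2*k) + Cu*T 1^2*T (2*k) - Cu*T 1^3*T (2*k))*hC)

lemma W11 (hGf : (T 1^2 - 1) * f = T (2*k) * (-Se) + sTm) : Concl u v f := by
  obtain ⟨he1, he0⟩ := RES ((u-v)-(u*v-1)) ((u*v-1)-(u-v)) f (-Se)
    (Cu*Cv - Cu - 1) sTm k hGf (by simp only [map_sub, map_mul, map_one]; ring)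
  have hfac : (u+1)*(v-1) = 0 := by linear_combination -he1
  rcases mul_eq_zero.mp hfac with hu | hv
  · have hC : Cu = -1 := by rw [show u = -1 by linear_combination hu]; simp
    refine famP u v f k (by linear_combination hGf +
      (T 1*T (2*k) - T 1^2*T (2*k) + Cv*T (2*k) - Cv*T 1*T (2*k))*hC)
  · have hC : Cv = 1 := by rw [show v = 1 by linear_combination hv]; simp
    refine famP' u v f k (by linear_combination hGf +
      (T (2*k) - T 1*T (2*k) - Cu*T 1*T (2*k) + Cu*T 1^2*T (2*k))*hC)

lemma W12 (hGf : (T 1^2 - 1) * f = T (2*k) * (-Se') + sTm) : Concl u v f := by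
  obtain ⟨he1, he0⟩ := RES ((u-v)-(u*v-1)) ((u*v-1)-(u-v)) f (-Se')
    (Cu*Cv + Cv - 1) sTm k hGf (by simp only [map_sub, map_mul, map_one]; ring)
  have hfac : (u+1)*(v-1) = 0 := by linear_combination -he1
  rcases mul_eq_zero.mp hfac with hu | hv
  · have hC : Cu = -1 := by rw [show u = -1 by linear_combination hu]; simp
    refine famP' u v f k (by linear_combination hGf +
      (-T (2*k) + T 1*T (2*k) - Cv*T 1*T (2*k) + Cv*T 1^2*T (2*k))*hC)
  · have hC : Cv = 1 := by rw [show v = 1 by linear_combination hv]; simp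
    refine famP u v f k (by linear_combination hGf +
      (-(T 1*T (2*k)) + T 1^2*T (2*k) + Cu*T (2*k) - Cu*T 1*T (2*k))*hC)

lemma W5 (hGf : (T 1^2 - 1) * f = T (2*k) * (T 1 * (-Pe)) + sTm) : Concl u v f := by
  obtain ⟨he1, he0⟩ := RES ((u*v-1)+(u-v)) ((u*v-1)+(u-v)) f (T 1 * (-Pe))
    ((Cu*Cv + Cu - Cv - 1) - T 1) sTm k hGf (by simp only [map_sub, map_mul, map_add, map_one]; ring)
  have hfac : (u-1)*(v+1) = 0 := by linear_combination he1
  rcases mul_eq_zero.mp hfac with hu | hv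
  · have hC : Cu = 1 := by rw [show u = 1 by linear_combination hu]; simp
    refine famS u v f k (by linear_combination hGf +
      (T 1^2*T (2*k) + T 1^3*T (2*k) + Cv*T 1*T (2*k) + Cv*T 1^2*T (2*k))*hC)
  · have hC : Cv = -1 := by rw [show v = -1 by linear_combination hv]; simp
    refine famS' u v f k (by linear_combination hGf +
      (-(T 1^2*T (2*k)) - T 1^3*T (2*k) + Cu*T 1*T (2*k) + Cu*T 1^2*T (2*k))*hC)

lemma W6 (hGf : (T 1^2 - 1) * f = T (2*k) * (T 1 * (-Pe')) + sTm) : Concl u v f := by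
  obtain ⟨he1, he0⟩ := RES ((u*v-1)+(u-v)) ((u*v-1)+(u-v)) f (T 1 * (-Pe'))
    ((Cu*Cv + Cu - Cv - 1) + Cu*Cv*T 1) sTm k hGf (by simp only [map_sub, map_mul, map_add, map_one]; ring)
  have hfac : (u-1)*(v+1) = 0 := by linear_combination he1
  rcases mul_eq_zero.mp hfac with hu | hv
  · have hC : Cu = 1 := by rw [show u = 1 by linear_combination hu]; simp
    refine famS' u v f k (by linear_combination hGf +
      (T 1*T (2*k) + T 1^2*T (2*k) + Cv*T 1^2*T (2*k) + Cv*T 1^3*T (2*k))*hC)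
  · have hC : Cv = -1 := by rw [show v = -1 by linear_combination hv]; simp
    refine famS u v f k (by linear_combination hGf +
      (-(T 1*T (2*k)) - T 1^2*T (2*k) + Cu*T 1^2*T (2*k) + Cu*T 1^3*T (2*k))*hC)

lemma W7 (hGf : (T 1^2 - 1) * f = T (2*k) * Se + sTm) : Concl u v f := by
  obtain ⟨he1, he0⟩ := RES ((u*v-1)+(u-v)) ((u*v-1)+(u-v)) f Se
    (Cu*Cv + Cu - 1) sTm k hGf (by simp only [map_sub, map_mul, map_add, map_one]; ring)
  have hfac : (u-1)*(v+1) = 0 := by linear_combination he1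
  rcases mul_eq_zero.mp hfac with hu | hv
  · have hC : Cu = 1 := by rw [show u = 1 by linear_combination hu]; simp
    refine famP u v f k (by linear_combination hGf +
      (T 1*T (2*k) + T 1^2*T (2*k) + Cv*T (2*k) + Cv*T 1*T (2*k))*hC)
  · have hC : Cv = -1 := by rw [show v = -1 by linear_combination hv]; simp
    refine famP' u v f k (by linear_combination hGf +
      (-T (2*k) - T 1*T (2*k) + Cu*T 1*T (2*k) + Cu*T 1^2*T (2*k))*hC)

lemma W8 (hGf : (T 1^2 - 1) * f = T (2*k) * Se' + sTm) : Concl u v f := by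
  obtain ⟨he1, he0⟩ := RES ((u*v-1)+(u-v)) ((u*v-1)+(u-v)) f Se'
    (Cu*Cv - Cv - 1) sTm k hGf (by simp only [map_sub, map_mul, map_add, map_one]; ring)
  have hfac : (u-1)*(v+1) = 0 := by linear_combination he1
  rcases mul_eq_zero.mp hfac with hu | hv
  · have hC : Cu = 1 := by rw [show u = 1 by linear_combination hu]; simp
    refine famP' u v f k (by linear_combination hGf +
      (T (2*k) + T 1*T (2*k) + Cv*T 1*T (2*k) + Cv*T 1^2*T (2*k))*hC)
  · have hC : Cv = -1 := by rw [show v = -1 by linear_combination hv]; simp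
    refine famP u v f k (by linear_combination hGf +
      (-(T 1*T (2*k)) - T 1^2*T (2*k) + Cu*T (2*k) + Cu*T 1*T (2*k))*hC)

end Wrong

section Wrong2

variable (u v : K) (f : K[T;T⁻¹]) (k : ℤ)

local notation "Cu" => (LaurentPolynomial.C u : K[T;T⁻¹])
local notation "Cv" => (LaurentPolynomial.C v : K[T;T⁻¹])
local notation "sTm" => ((Cu * Cv - 1) * T 1^2 + (Cu - Cv) * T 1 : K[T;T⁻¹])
local notation "Pe" => (T 1^2 - (Cu - Cv) * T 1 - Cu * Cv : K[T;T⁻¹])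
local notation "Pe'" => ((1 : K[T;T⁻¹]) - (Cu - Cv) * T 1 - Cu * Cv * T 1^2)
local notation "Se" => (Cu * T 1^2 + (Cu * Cv - 1) * T 1 - Cv : K[T;T⁻¹])
local notation "Se'" => (-Cv * T 1^2 + (Cu * Cv - 1) * T 1 + Cu : K[T;T⁻¹])

lemma char2C (h2z : (2:K) = 0) : ((1 : K[T;T⁻¹]) + 1) = 0 := by
  have h : ((1:K)+1) = 0 := by linear_combination h2z
  calc (1 : K[T;T⁻¹]) + 1 = LaurentPolynomial.C ((1:K)+1) := by simp
    _ = 0 := by rw [h, map_zero]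

lemma degC (h2b : (2:K)*(u*v-1) = 0) (h2c : (2:K)*(u-v) = 0) (h2z : ¬ (2:K) = 0) :
    u*v - 1 = 0 ∧ u - v = 0 := by
  constructor
  · rcases mul_eq_zero.mp h2b with h | h
    exacts [absurd h h2z, h]
  · rcases mul_eq_zero.mp h2c with h | h
    exacts [absurd h h2z, h]

lemma W3 (hGf : (T 1^2 - 1) * f = T (2*k) * (-Pe) + sTm) : Concl u v f := by
  obtain ⟨he1, he0⟩ := RES ((u-v)+(u-v)) ((u*v-1)+(u*v-1)) f (-Pe)
    (Cu*Cv - 2) sTm k hGf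
    (by simp only [map_sub, map_mul, map_add, map_one, map_ofNat]; push_cast; ring)
  by_cases h2z : (2:K) = 0
  · have hC2 := char2C (K := K) h2z
    refine famP u v f k (by linear_combination hGf + (-(T (2*k) * Pe))*hC2)
  · obtain ⟨hb0, hc0⟩ := degC u v (by linear_combination he0) (by linear_combination he1) h2z
    have hbC : Cu * Cv = 1 := by
      rw [← map_mul, show u*v = 1 by linear_combination hb0, map_one]
    have hcC : Cu = Cv := by rw [show u = v by linear_combination hc0]
    have hf' : f = -T (2*k) := by
      apply cancelT Tsq_ne
      rw [hGf]
      linear_combination (T (2*k)*T 1 + T 1)*hcC + (T (2*k) + T 1^2)*hbC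
    rcases le_or_gt 0 k with hk | hk
    · refine ⟨k.toNat, Or.inr (Or.inr (Or.inr (Or.inr (Or.inr (Or.inr (Or.inr ?_))))))⟩
      rw [hf', R0 u v _ hb0 hc0, show (2*((k.toNat : ℕ):ℤ)) = 2*k by rw [Int.toNat_of_nonneg hk]]
      ring
    · refine ⟨(-k).toNat, Or.inr (Or.inl ?_)⟩
      rw [hf', R0 u v _ hb0 hc0,
        show (-(2*(((-k).toNat : ℕ):ℤ))) = 2*k by rw [Int.toNat_of_nonneg (by omega : (0:ℤ) ≤ -k)]; ring]
      ring

lemma W4 (hGf : (T 1^2 - 1) * f = T (2*k) * (-Pe') + sTm) : Concl u v f := by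
  obtain ⟨he1, he0⟩ := RES ((u-v)+(u-v)) ((u*v-1)+(u*v-1)) f (-Pe')
    (2*(Cu*Cv) - 1) sTm k hGf
    (by simp only [map_sub, map_mul, map_add, map_one, map_ofNat]; push_cast; ring)
  by_cases h2z : (2:K) = 0
  · have hC2 := char2C (K := K) h2z
    refine famP' u v f k (by linear_combination hGf + (-(T (2*k) * Pe'))*hC2)
  · obtain ⟨hb0, hc0⟩ := degC u v (by linear_combination he0) (by linear_combination he1) h2z
    have hbC : Cu * Cv = 1 := by
      rw [← map_mul, show u*v = 1 by linear_combination hb0, map_one]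
    have hcC : Cu = Cv := by rw [show u = v by linear_combination hc0]
    have hf' : f = T (2*k) := by
      apply cancelT Tsq_ne
      rw [hGf]
      linear_combination (T (2*k)*T 1 + T 1)*hcC + (T (2*k)*T 1^2 + T 1^2)*hbC
    rcases le_or_gt 0 k with hk | hk
    · refine ⟨k.toNat, Or.inr (Or.inr (Or.inr (Or.inr (Or.inr (Or.inr (Or.inl ?_))))))⟩
      rw [hf', R0 u v _ hb0 hc0, show u*v = 1 by linear_combination hb0, map_one,
        show (2*((k.toNat : ℕ):ℤ)) = 2*k by rw [Int.toNat_of_nonneg hk]]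
      ring
    · refine ⟨(-k).toNat, Or.inl ?_⟩
      rw [hf', R0 u v _ hb0 hc0, show u*v = 1 by linear_combination hb0, map_one,
        show (-(2*(((-k).toNat : ℕ):ℤ))) = 2*k by rw [Int.toNat_of_nonneg (by omega : (0:ℤ) ≤ -k)]; ring]
      ring

lemma W9 (hGf : (T 1^2 - 1) * f = T (2*k) * (T 1 * Se) + sTm) : Concl u v f := by
  obtain ⟨he1, he0⟩ := RES ((u-v)+(u-v)) ((u*v-1)+(u*v-1)) f (T 1 * Se)
    ((2*(Cu*Cv) - 2) + Cu*T 1) sTm k hGf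
    (by simp only [map_sub, map_mul, map_add, map_one, map_ofNat]; push_cast; ring)
  by_cases h2z : (2:K) = 0
  · have hC2 := char2C (K := K) h2z
    refine famS u v f k (by linear_combination hGf + (T (2*k) * T 1 * Se)*hC2)
  · obtain ⟨hb0, hc0⟩ := degC u v (by linear_combination he0) (by linear_combination he1) h2z
    have hbC : Cu * Cv = 1 := by
      rw [← map_mul, show u*v = 1 by linear_combination hb0, map_one]
    have hcC : Cu = Cv := by rw [show u = v by linear_combination hc0]
    have htz : (T 1 : K[T;T⁻¹]) * T (-1) = 1 := by rw [← T_add]; norm_num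
    have hf' : f = Cu * (T (2*k) * T 1) := by
      apply cancelT Tsq_ne
      rw [hGf]
      linear_combination (T (2*k)*T 1 + T 1)*hcC + (T (2*k)*T 1^2 + T 1^2)*hbC
    rcases le_or_gt 0 k with hk | hk
    · refine ⟨k.toNat, Or.inr (Or.inr (Or.inr (Or.inr (Or.inr (Or.inl ?_)))))⟩
      rw [hf', R0 u v _ hb0 hc0, ← hcC,
        show (2*((k.toNat : ℕ):ℤ)+1) = 2*k+1 by rw [Int.toNat_of_nonneg hk], T_add]
      ring
    · refine ⟨(-k-1).toNat, Or.inr (Or.inr (Or.inl ?_))⟩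
      have hdk : (((-k-1).toNat : ℕ):ℤ) = -k-1 := Int.toNat_of_nonneg (by omega)
      rw [hf', R0 u v _ hb0 hc0, show u*v-1 = 0 by linear_combination hb0, map_zero,
        show (-(2*(((-k-1).toNat : ℕ):ℤ))) = (2*k+1)+1 by rw [hdk]; ring, T_add, T_add]
      linear_combination (-(Cu*(T (2*k) * T 1)))*htz
    
lemma W10 (hGf : (T 1^2 - 1) * f = T (2*k) * (T 1 * Se') + sTm) : Concl u v f := by
  obtain ⟨he1, he0⟩ := RES ((u-v)+(u-v)) ((u*v-1)+(u*v-1)) f (T 1 * Se')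
    ((2*(Cu*Cv) - 2) - Cv*T 1) sTm k hGf
    (by simp only [map_sub, map_mul, map_add, map_one, map_ofNat]; push_cast; ring)
  by_cases h2z : (2:K) = 0
  · have hC2 := char2C (K := K) h2z
    refine famS' u v f k (by linear_combination hGf + (T (2*k) * T 1 * Se')*hC2)
  · obtain ⟨hb0, hc0⟩ := degC u v (by linear_combination he0) (by linear_combination he1) h2z
    have hbC : Cu * Cv = 1 := by
      rw [← map_mul, show u*v = 1 by linear_combination hb0, map_one]
    have hcC : Cu = Cv := by rw [show u = v by linear_combination hc0]
    have htz : (T 1 : K[T;T⁻¹]) * T (-1) = 1 := by rw [← T_add]; norm_num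
    have hf' : f = -(Cu * (T (2*k) * T 1)) := by
      apply cancelT Tsq_ne
      rw [hGf]
      linear_combination (T (2*k)*T 1^3 + T 1)*hcC + (T (2*k)*T 1^2 + T 1^2)*hbC
    rcases le_or_gt 0 k with hk | hk
    · refine ⟨k.toNat, Or.inr (Or.inr (Or.inr (Or.inr (Or.inl ?_))))⟩
      rw [hf', R0 u v _ hb0 hc0,
        show (2*((k.toNat : ℕ):ℤ)+1) = 2*k+1 by rw [Int.toNat_of_nonneg hk], T_add]
      ring
    · refine ⟨(-k-1).toNat, Or.inr (Or.inr (Or.inr (Or.inl ?_)))⟩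
      have hdk : (((-k-1).toNat : ℕ):ℤ) = -k-1 := Int.toNat_of_nonneg (by omega)
      rw [hf', R0 u v _ hb0 hc0, show u*v-1 = 0 by linear_combination hb0, map_zero, ← hcC,
        show (-(2*(((-k-1).toNat : ℕ):ℤ))) = (2*k+1)+1 by rw [hdk]; ring, T_add, T_add]
      linear_combination (Cu*(T (2*k) * T 1))*htz

end Wrong2

lemma step1 (u v : K) (f : K[T;T⁻¹]) (hf : SatStar u v f) :
    ((T 1^2 - 1) * f - LaurentPolynomial.C (u*v-1) * T 1^2 - LaurentPolynomial.C (u-v) * T 1) *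
      invert ((T 1^2 - 1) * f - LaurentPolynomial.C (u*v-1) * T 1^2 - LaurentPolynomial.C (u-v) * T 1)
    = (T 1^2 - LaurentPolynomial.C (u-v) * T 1 - LaurentPolynomial.C (u*v)) *
      invert (T 1^2 - LaurentPolynomial.C (u-v) * T 1 - LaurentPolynomial.C (u*v)) := by
  unfold SatStar at hf
  have h2 : (T 2 : K[T;T⁻¹]) = T 1 ^ 2 := by rw [show (2:ℤ) = 1+1 from rfl, T_add]; ring
  have htz : (T 1 : K[T;T⁻¹]) * T (-1) = 1 := by rw [← T_add]; norm_num
  rw [h2] at hf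
  simp only [map_sub, map_mul, map_one, map_pow, invert_T, invert_C] at hf ⊢
  set t : K[T;T⁻¹] := T 1 with ht
  set z : K[T;T⁻¹] := T (-1) with hz
  set F : K[T;T⁻¹] := f with hF
  set G : K[T;T⁻¹] := invert f with hG
  set cu : K[T;T⁻¹] := LaurentPolynomial.C u with hcu
  set cv : K[T;T⁻¹] := LaurentPolynomial.C v with hcv
  linear_combination (-(z^2)*(t^2-1)) * hf +
    (-(F*G) - t*z*F*G + t^2*G + t^2*F*G + t^3*z*G + t^3*z*F*G + cv*z*F + cv*t*G + cv*t^2*z*G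
      - cv*t^2*z*F - cu*z*F - cu*t*G - cu*t^2*z*G + cu*t^2*z*F - cu*cv*t^2 - cu*cv*t^2*G
      - cu*cv*t^3*z - cu*cv*t^3*z*G - cu*cv^2*z - cu*cv^2*t + cu^2*cv*z + cu^2*cv*t
      + cu^2*cv^2 + cu^2*cv^2*t*z) * htz

lemma decomp (G : K[T;T⁻¹]) (h : G ≠ 0) :
    ∃ (m : ℤ) (g : K[X]), g.coeff 0 ≠ 0 ∧ G = T m * Polynomial.toLaurent g := by
  obtain ⟨n, g0, hg0⟩ := G.exists_T_pow
  have hGd : G = Polynomial.toLaurent g0 * T (-(n:ℤ)) := by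
    have h1 : (T (n:ℤ) : K[T;T⁻¹]) * T (-(n:ℤ)) = 1 := by
      rw [← T_add, add_neg_cancel, T_zero]
    calc G = G * (T (n:ℤ) * T (-(n:ℤ))) := by rw [h1, mul_one]
      _ = (G * T (n:ℤ)) * T (-(n:ℤ)) := by ring
      _ = Polynomial.toLaurent g0 * T (-(n:ℤ)) := by rw [← hg0]
  have hg0ne : g0 ≠ 0 := by
    intro h0
    apply h
    rw [hGd, h0, map_zero, zero_mul]
  obtain ⟨g, hg, hnd⟩ := g0.exists_eq_pow_rootMultiplicity_mul_and_not_dvd hg0ne 0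
  rw [map_zero, sub_zero] at hg hnd
  obtain ⟨k0, hk0⟩ : ∃ k0 : ℕ, Polynomial.rootMultiplicity 0 g0 = k0 := ⟨_, rfl⟩
  rw [hk0] at hg
  refine ⟨(k0 : ℤ) - n, g, ?_, ?_⟩
  · intro hc
    exact hnd (Polynomial.X_dvd_iff.mpr hc)
  · rw [hGd, hg, map_mul, Polynomial.toLaurent_X_pow, T_sub]
    ring

lemma natdeg_p (u v : K) :
    (Polynomial.X^2 - Polynomial.C (u-v) * Polynomial.X - Polynomial.C (u*v)).natDegree = 2 := by
  have h : (Polynomial.X^2 - Polynomial.C (u-v) * Polynomial.X - Polynomial.C (u*v) : K[X])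
      = Polynomial.C 1 * Polynomial.X^2 + Polynomial.C (-(u-v)) * Polynomial.X + Polynomial.C (-(u*v)) := by
    simp only [map_neg, map_one]
    ring
  rw [h]
  exact Polynomial.natDegree_quadratic one_ne_zero

lemma main_aux (u v : K) (f : K[T;T⁻¹]) (hf : SatStar u v f) : Concl u v f := by
  classical
  have hG := step1 u v f hf
  set Gx : K[T;T⁻¹] :=
    (T 1^2 - 1) * f - LaurentPolynomial.C (u*v-1) * T 1^2 - LaurentPolynomial.C (u-v) * T 1
    with hGxdef
  set p : K[X] := Polynomial.X^2 - Polynomial.C (u-v) * Polynomial.X - Polynomial.C (u*v)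
    with hpdef
  have hp : Polynomial.toLaurent p
      = T 1^2 - LaurentPolynomial.C (u-v) * T 1 - LaurentPolynomial.C (u*v) := by
    rw [hpdef]
    simp only [map_sub, map_mul, map_pow, Polynomial.toLaurent_C, Polynomial.toLaurent_X]
  have hpd : p.natDegree = 2 := by rw [hpdef]; exact natdeg_p u v
  have hpne : p ≠ 0 := by intro h0; rw [h0] at hpd; simp at hpd
  have hPne : Polynomial.toLaurent p ≠ 0 := by rwa [Ne, Polynomial.toLaurent_eq_zero]
  have hPine : invert (Polynomial.toLaurent p) ≠ 0 := by
    intro h0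
    apply hPne
    have h1 := congrArg invert h0
    rwa [involutive_invert _, map_zero] at h1
  rw [← hp] at hG
  have hGne : Gx ≠ 0 := by
    have : NoZeroDivisors (K[T;T⁻¹]) := domain_aux
    intro h0
    rw [h0, map_zero, mul_zero] at hG
    rcases mul_eq_zero.mp hG.symm with h | h
    exacts [hPne h, hPine h]
  obtain ⟨m, g, hg0, hGdec⟩ := decomp Gx hGne
  have hmm : (T m : K[T;T⁻¹]) * T (-m) = 1 := by rw [← T_add, add_neg_cancel, T_zero]
  have hGG : Polynomial.toLaurent g * invert (Polynomial.toLaurent g)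
      = Polynomial.toLaurent p * invert (Polynomial.toLaurent p) := by
    have e : Gx * invert Gx
        = (Polynomial.toLaurent g * invert (Polynomial.toLaurent g)) * (T m * T (-m)) := by
      rw [hGdec, map_mul, invert_T]; ring
    calc Polynomial.toLaurent g * invert (Polynomial.toLaurent g)
        = Polynomial.toLaurent g * invert (Polynomial.toLaurent g) * (T m * T (-m)) := by
          rw [hmm, mul_one]
      _ = Gx * invert Gx := e.symm
      _ = Polynomial.toLaurent p * invert (Polynomial.toLaurent p) := hG
  set N : ℕ := max g.natDegree 2 with hNdef
  have hgN : g.natDegree < N + 1 := by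
    have := le_max_left g.natDegree 2; omega
  have hpN : p.natDegree < N + 1 := by
    have := le_max_right g.natDegree 2; omega
  have h1 := invert_toLaurent_eq g N hgN
  have h2 := invert_toLaurent_eq p N hpN
  have key : Polynomial.toLaurent (g * Polynomial.reflect N g)
      = Polynomial.toLaurent (p * Polynomial.reflect N p) := by
    rw [map_mul, map_mul, h1, h2]
    linear_combination (T (N:ℤ) : K[T;T⁻¹]) * hGG
  have hkeyN : g * Polynomial.reflect N g = p * Polynomial.reflect N p :=
    Polynomial.toLaurent_injective key
  have hgne : g ≠ 0 := fun h0 => hg0 (by rw [h0]; simp)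
  have hRgne : Polynomial.reflect N g ≠ 0 := by rwa [Ne, Polynomial.reflect_eq_zero_iff]
  have hRgge : N ≤ (Polynomial.reflect N g).natDegree := by
    apply Polynomial.le_natDegree_of_ne_zero
    rw [Polynomial.coeff_reflect, Polynomial.revAt_le (le_refl N), Nat.sub_self]
    exact hg0
  have hdegL : (g * Polynomial.reflect N g).natDegree
      = g.natDegree + (Polynomial.reflect N g).natDegree :=
    Polynomial.natDegree_mul hgne hRgne
  have hdegR : (p * Polynomial.reflect N p).natDegree ≤ 2 + N := by
    apply le_trans Polynomial.natDegree_mul_le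
    have := reflect_natDegree_le p N (by omega)
    omega
  have hn2 : g.natDegree ≤ 2 := by
    rw [hkeyN] at hdegL
    omega
  have hN2 : N = 2 := by rw [hNdef]; exact max_eq_right hn2
  rw [hN2] at hkeyN
  have hpd2 : p.natDegree ≤ 2 := le_of_eq hpd
  have hpc0 : p.coeff 0 = -(u*v) := by
    rw [hpdef]
    simp [Polynomial.coeff_sub, Polynomial.coeff_X_pow, Polynomial.coeff_C]
  have hpc1 : p.coeff 1 = -(u-v) := by
    rw [hpdef]
    simp [Polynomial.coeff_sub, Polynomial.coeff_X_pow, Polynomial.coeff_C]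
  have hpc2 : p.coeff 2 = 1 := by
    rw [hpdef]
    simp [Polynomial.coeff_sub, Polynomial.coeff_X_pow, Polynomial.coeff_C]
  have hprefl : Polynomial.reflect 2 p
      = Polynomial.C 1 + Polynomial.C (-(u-v)) * Polynomial.X
        + Polynomial.C (-(u*v)) * Polynomial.X^2 := by
    rw [reflexp p hpd2, hpc0, hpc1, hpc2]
  have hpexp : p = Polynomial.C (-(u*v)) + Polynomial.C (-(u-v)) * Polynomial.X
      + Polynomial.C 1 * Polynomial.X^2 := by
    conv_lhs => rw [gexp p hpd2]
    rw [hpc0, hpc1, hpc2]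
  have hkey2 : (Polynomial.C (g.coeff 0) + Polynomial.C (g.coeff 1) * Polynomial.X
        + Polynomial.C (g.coeff 2) * Polynomial.X^2)
      * (Polynomial.C (g.coeff 2) + Polynomial.C (g.coeff 1) * Polynomial.X
        + Polynomial.C (g.coeff 0) * Polynomial.X^2)
      = (Polynomial.C (-(u*v)) + Polynomial.C (-(u-v)) * Polynomial.X
        + Polynomial.C 1 * Polynomial.X^2)
      * (Polynomial.C 1 + Polynomial.C (-(u-v)) * Polynomial.X
        + Polynomial.C (-(u*v)) * Polynomial.X^2) := by
    rw [← gexp g hn2, ← reflexp g hn2, hkeyN, hprefl, ← hpexp]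
  rw [prodForm, prodForm] at hkey2
  obtain ⟨e0, e1, e2⟩ := quart_eq _ _ _ _ _ _ _ _ _ _ hkey2
  have halg := ALG u v (g.coeff 2) (g.coeff 1) (g.coeff 0)
    (by linear_combination e0) (by linear_combination e1) (by linear_combination e2)
  have hGf0 : (T 1^2 - 1) * f
      = T m * Polynomial.toLaurent g
        + ((LaurentPolynomial.C u * LaurentPolynomial.C v - 1) * T 1^2
          + (LaurentPolynomial.C u - LaurentPolynomial.C v) * T 1) := by
    have hd := hGdec
    rw [hGxdef] at hd
    simp only [map_sub, map_mul, map_one] at hd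
    linear_combination hd
  have htoLg : Polynomial.toLaurent g
      = LaurentPolynomial.C (g.coeff 0) + LaurentPolynomial.C (g.coeff 1) * T 1
        + LaurentPolynomial.C (g.coeff 2) * T 1^2 := by
    conv_lhs => rw [gexp g hn2]
    simp only [map_add, map_mul, map_pow, Polynomial.toLaurent_C, Polynomial.toLaurent_X]
  rw [htoLg] at hGf0
  rcases Int.even_or_odd m with ⟨k, hk⟩ | ⟨k, hk⟩
  · have hTm : (T m : K[T;T⁻¹]) = T (2*k) := by rw [show m = 2*k by omega]
    rw [hTm] at hGf0
    rcases halg with ⟨h2c, h1c, h0c⟩ | ⟨h2c, h1c, h0c⟩ | ⟨h2c, h1c, h0c⟩ | ⟨h2c, h1c, h0c⟩ |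
      ⟨h2c, h1c, h0c⟩ | ⟨h2c, h1c, h0c⟩ | ⟨h2c, h1c, h0c⟩ | ⟨h2c, h1c, h0c⟩ <;>
      rw [h0c, h1c, h2c] at hGf0 <;>
      simp only [map_neg, map_sub, map_mul, map_one] at hGf0
    · exact famP u v f k (by linear_combination hGf0)
    · exact famP' u v f k (by linear_combination hGf0)
    · exact W3 u v f k (by linear_combination hGf0)
    · exact W4 u v f k (by linear_combination hGf0)
    · exact W7 u v f k (by linear_combination hGf0)
    · exact W8 u v f k (by linear_combination hGf0)
    · exact W11 u v f k (by linear_combination hGf0)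
    · exact W12 u v f k (by linear_combination hGf0)
  · have hTm : (T m : K[T;T⁻¹]) = T (2*k) * T 1 := by rw [hk, T_add]
    rw [hTm] at hGf0
    rcases halg with ⟨h2c, h1c, h0c⟩ | ⟨h2c, h1c, h0c⟩ | ⟨h2c, h1c, h0c⟩ | ⟨h2c, h1c, h0c⟩ |
      ⟨h2c, h1c, h0c⟩ | ⟨h2c, h1c, h0c⟩ | ⟨h2c, h1c, h0c⟩ | ⟨h2c, h1c, h0c⟩ <;>
      rw [h0c, h1c, h2c] at hGf0 <;>
      simp only [map_neg, map_sub, map_mul, map_one] at hGf0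
    · exact W1 u v f k (by linear_combination hGf0)
    · exact W2 u v f k (by linear_combination hGf0)
    · exact W5 u v f k (by linear_combination hGf0)
    · exact W6 u v f k (by linear_combination hGf0)
    · exact W9 u v f k (by linear_combination hGf0)
    · exact W10 u v f k (by linear_combination hGf0)
    · exact famS u v f k (by linear_combination hGf0)
    · exact famS' u v f k (by linear_combination hGf0)

end StarAux

/-- The complete list of solutions of equation (★) (Lemma 3.4 of the paper). -/
theorem statement0 {K : Type*} [Field K] (u v : K) (f : K[T;T⁻¹])
    (hf : SatStar u v f) :
    ∃ d : ℕ,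
      f = T (-(2 * (d : ℤ))) * (Rpoly u v d + C (u * v)) ∨
      f = T (-(2 * (d : ℤ))) * (Rpoly u v d - 1) ∨
      f = T (-(2 * (d : ℤ))) * (Rpoly u v d + C (u * v - 1) + C u * T (-1)) ∨
      f = T (-(2 * (d : ℤ))) * (Rpoly u v d + C (u * v - 1) - C v * T (-1)) ∨
      f = -(C u) * T (2 * (d : ℤ) + 1) - Rpoly u v d ∨
      f = C v * T (2 * (d : ℤ) + 1) - Rpoly u v d ∨
      f = C (u * v) * T (2 * (d : ℤ)) - Rpoly u v d ∨
      f = -T (2 * (d : ℤ)) - Rpoly u v d := by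
  obtain ⟨d, hd⟩ := StarAux.main_aux u v f hf
  exact ⟨d, hd⟩
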